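/- Let n > 0, c ∈ ℝ, and let f : [0,1) → (0,∞) be continuous with ∫_0^1 x (1−x)² (1+x) f(x)^(−n) dx < ∞. Then there exists exactly one function v : [0,1] → ℝ that is continuously differentiable on [0,1], three times continuously differentiable on [0,1), and satisfies f(x)^n · v'''(x) = c · x · (1 − x²) for all x ∈ (0,1), v(1) = 0, v'(1) = 0, and v'(0) = 0. -/

import Mathlib

open Set Filter MeasureTheory intervalIntegral
open scoped Topology



/-- A function with zero derivative on `Ioo 0 1` takes equal values there. -/
lemma aux_const_of_deriv_zero {Q : ℝ → ℝ}
    (h : ∀ x ∈ Ioo (0:ℝ) 1, HasDerivAt Q 0 x) :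
    ∀ x ∈ Ioo (0:ℝ) 1, ∀ y ∈ Ioo (0:ℝ) 1, Q x = Q y := by
  have key : ∀ x ∈ Ioo (0:ℝ) 1, ∀ y ∈ Ioo (0:ℝ) 1, x ≤ y → Q y = Q x := by
    intro x hx y hy hxy
    have hsub : Icc x y ⊆ Ioo (0:ℝ) 1 := fun t ht =>
      ⟨lt_of_lt_of_le hx.1 ht.1, lt_of_le_of_lt ht.2 hy.2⟩
    have hcont : ContinuousOn Q (Icc x y) := fun t ht =>
      ((h t (hsub ht)).differentiableAt.continuousAt).continuousWithinAt
    have hder : ∀ t ∈ Ico x y, HasDerivWithinAt Q 0 (Ici t) t := fun t ht =>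
      (h t (hsub ⟨ht.1, ht.2.le⟩)).hasDerivWithinAt
    exact constant_of_has_deriv_right_zero hcont hder y (right_mem_Icc.2 hxy)
  intro x hx y hy
  rcases le_total x y with hxy | hxy
  · exact (key x hx y hy hxy).symm
  · exact key y hy x hx hxy



lemma aux_endpoint_eq {Q : ℝ → ℝ} {M a : ℝ}
    (hc : ContinuousWithinAt Q (Icc 0 1) a) (hcl : a ∈ closure (Ioo (0:ℝ) 1))
    (h : ∀ x ∈ Ioo (0:ℝ) 1, Q x = M) : Q a = M := by
  haveI : (𝓝[Ioo (0:ℝ) 1] a).NeBot := mem_closure_iff_nhdsWithin_neBot.1 hcl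
  have t1 : Tendsto Q (𝓝[Ioo (0:ℝ) 1] a) (𝓝 (Q a)) :=
    hc.tendsto.mono_left (nhdsWithin_mono a Ioo_subset_Icc_self)
  have t2 : Tendsto Q (𝓝[Ioo (0:ℝ) 1] a) (𝓝 M) := by
    refine Tendsto.congr' ?_ tendsto_const_nhds
    filter_upwards [self_mem_nhdsWithin] with x hx
    exact (h x hx).symm
  exact tendsto_nhds_unique t1 t2

/-- Uniqueness for the two-point boundary value problem. -/
lemma aux_bvp_unique {P P1 : ℝ → ℝ}
    (hPc : ContinuousOn P (Icc 0 1)) (hP0 : P 0 = 0) (hP1 : P 1 = 0)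
    (hd1 : ∀ x ∈ Ioo (0:ℝ) 1, HasDerivAt P (P1 x) x)
    (hd2 : ∀ x ∈ Ioo (0:ℝ) 1, HasDerivAt P1 0 x) :
    ∀ x ∈ Icc (0:ℝ) 1, P x = 0 := by
  have hhalf : (1/2 : ℝ) ∈ Ioo (0:ℝ) 1 := by norm_num
  set K := P1 (1/2) with hK
  have hP1K : ∀ x ∈ Ioo (0:ℝ) 1, P1 x = K := fun x hx =>
    aux_const_of_deriv_zero hd2 x hx (1/2) hhalf
  set Q : ℝ → ℝ := fun x => P x - K * x with hQdef
  have hQd : ∀ x ∈ Ioo (0:ℝ) 1, HasDerivAt Q 0 x := by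
    intro x hx
    have := (hd1 x hx).sub ((hasDerivAt_id x).const_mul K)
    have h0 : P1 x - K * 1 = 0 := by rw [hP1K x hx]; ring
    rw [h0] at this; exact this
  have hQc : ContinuousOn Q (Icc 0 1) :=
    hPc.sub ((continuous_const.mul continuous_id).continuousOn)
  set M := Q (1/2) with hM
  have hQM : ∀ x ∈ Ioo (0:ℝ) 1, Q x = M := fun x hx =>
    aux_const_of_deriv_zero hQd x hx (1/2) hhalf
  have hcl0 : (0:ℝ) ∈ closure (Ioo (0:ℝ) 1) := by
    rw [closure_Ioo (by norm_num : (0:ℝ) ≠ 1)]; exact ⟨le_refl 0, zero_le_one⟩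
  have hcl1 : (1:ℝ) ∈ closure (Ioo (0:ℝ) 1) := by
    rw [closure_Ioo (by norm_num : (0:ℝ) ≠ 1)]; exact ⟨zero_le_one, le_refl 1⟩
  have hQ0 : Q 0 = M := aux_endpoint_eq (hQc 0 (by norm_num)) hcl0 hQM
  have hQ1 : Q 1 = M := aux_endpoint_eq (hQc 1 (by norm_num)) hcl1 hQM
  have hM0 : M = 0 := by
    have : Q 0 = P 0 - K * 0 := rfl
    rw [hP0] at this; simp at this; rw [← hQ0, this]
  have hK0 : K = 0 := by
    have h1 : Q 1 = P 1 - K * 1 := rfl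
    rw [hP1] at h1; rw [hQ1, hM0] at h1; linarith
  intro x hx
  rcases eq_or_lt_of_le hx.1 with h0 | h0
  · rw [← h0]; exact hP0
  rcases eq_or_lt_of_le hx.2 with h1 | h1
  · rw [h1]; exact hP1
  have := hQM x ⟨h0, h1⟩
  rw [hM0] at this
  have : P x - K * x = 0 := this
  rw [hK0] at this; linarith



lemma aux_ftc_Ioo {φ : ℝ → ℝ} {a : ℝ} (hφ : ContinuousOn φ (Ico 0 1))
    (hi : ∀ x ∈ Ico (0:ℝ) 1, IntervalIntegrable φ MeasureTheory.volume a x)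
    {x : ℝ} (hx : x ∈ Ioo (0:ℝ) 1) :
    HasDerivAt (fun u => ∫ t in a..u, φ t) (φ x) x := by
  have hmemIco : Ico (0:ℝ) 1 ∈ 𝓝 x := Ico_mem_nhds hx.1 hx.2
  exact integral_hasDerivAt_right (hi x ⟨hx.1.le, hx.2⟩)
    ⟨Ico (0:ℝ) 1, hmemIco, hφ.aestronglyMeasurable measurableSet_Ico⟩
    (hφ.continuousAt hmemIco)

lemma aux_ftc_Ico {φ : ℝ → ℝ} {a : ℝ} (hφ : ContinuousOn φ (Ico 0 1))
    (hi : ∀ x ∈ Ico (0:ℝ) 1, IntervalIntegrable φ MeasureTheory.volume a x)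
    {x : ℝ} (hx : x ∈ Ico (0:ℝ) 1) :
    HasDerivWithinAt (fun u => ∫ t in a..u, φ t) (φ x) (Ico 0 1) x := by
  haveI : Fact (x ∈ Icc (0:ℝ) 1) := ⟨⟨hx.1, hx.2.le⟩⟩
  have hIcoIcc : Ico (0:ℝ) 1 ∈ 𝓝[Icc (0:ℝ) 1] x :=
    mem_nhdsWithin.2 ⟨Iio 1, isOpen_Iio, hx.2, fun t ht => ⟨ht.2.1, ht.1⟩⟩
  have h := integral_hasDerivWithinAt_right (s := Icc (0:ℝ) 1) (t := Icc (0:ℝ) 1)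
    (hi x hx) ⟨Ico (0:ℝ) 1, hIcoIcc, hφ.aestronglyMeasurable measurableSet_Ico⟩
    ((hφ x hx).mono_of_mem_nhdsWithin hIcoIcc)
  exact h.mono Ico_subset_Icc_self

lemma aux_tendsto_H {g : ℝ → ℝ} (hg : ContinuousOn g (Ico 0 1))
    (hψ : IntervalIntegrable (fun t => (1 - t) * g t) MeasureTheory.volume 0 1) :
    Tendsto (fun x => (1 - x) * ∫ t in (0:ℝ)..x, t * g t) (𝓝[<] (1:ℝ)) (𝓝 0) := by
  set μ := MeasureTheory.volume.restrict (Ioo (0:ℝ) 1) with hμ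
  set Φ : ℝ → ℝ → ℝ := fun x => (Ioc (0:ℝ) x).indicator (fun t => (1 - x) * (t * g t)) with hΦ
  have hIoo_mem : Ioo (0:ℝ) 1 ∈ 𝓝[<] (1:ℝ) :=
    mem_nhdsWithin.2 ⟨Ioi 0, isOpen_Ioi, by norm_num, fun t ht => ⟨ht.1, ht.2⟩⟩
  have hgm : AEStronglyMeasurable g μ :=
    (hg.mono Ioo_subset_Ico_self).aestronglyMeasurable measurableSet_Ioo
  have key : Tendsto (fun x => ∫ t, Φ x t ∂μ) (𝓝[<] (1:ℝ)) (𝓝 (∫ t, (0:ℝ) ∂μ)) := by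
    apply MeasureTheory.tendsto_integral_filter_of_dominated_convergence (fun t => |(1 - t) * g t|)
    · filter_upwards with x
      exact ((aestronglyMeasurable_const.mul (aestronglyMeasurable_id.mul hgm)).indicator
        measurableSet_Ioc)
    · filter_upwards [hIoo_mem] with x hx
      filter_upwards [ae_restrict_mem measurableSet_Ioo] with t ht
      by_cases hmem : t ∈ Ioc (0:ℝ) x
      · rw [hΦ]; simp only [indicator_of_mem hmem]
        rw [Real.norm_eq_abs, abs_mul, abs_mul, abs_mul]
        have h1 : |1 - x| ≤ |1 - t| := by
          rw [abs_of_nonneg (by linarith [hx.2] : (0:ℝ) ≤ 1 - x),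
            abs_of_nonneg (by linarith [ht.2] : (0:ℝ) ≤ 1 - t)]
          linarith [hmem.2]
        have h2 : |t| ≤ 1 := by
          rw [abs_of_nonneg ht.1.le]; exact ht.2.le
        calc |1 - x| * (|t| * |g t|) ≤ |1 - t| * (1 * |g t|) := by
              apply mul_le_mul h1 (mul_le_mul_of_nonneg_right h2 (abs_nonneg _))
                (by positivity) (abs_nonneg _)
          _ = |1 - t| * |g t| := by ring
      · rw [hΦ]; simp only [indicator_of_notMem hmem, norm_zero]
        positivity
    · have : IntegrableOn (fun t => (1 - t) * g t) (Ioo (0:ℝ) 1) MeasureTheory.volume :=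
        hψ.1.mono_set Ioo_subset_Ioc_self
      exact this.abs
    · filter_upwards [ae_restrict_mem measurableSet_Ioo] with t ht
      have hmemt : Ioi t ∈ 𝓝[<] (1:ℝ) :=
        mem_nhdsWithin_of_mem_nhds (Ioi_mem_nhds ht.2)
      have hev : (fun x => Φ x t) =ᶠ[𝓝[<] (1:ℝ)] fun x => (1 - x) * (t * g t) := by
        filter_upwards [hmemt] with x hx
        rw [hΦ]; exact Set.indicator_of_mem (show t ∈ Ioc (0:ℝ) x from ⟨ht.1, le_of_lt hx⟩) _
      refine Tendsto.congr' hev.symm ?_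
      have : Tendsto (fun x : ℝ => (1 - x) * (t * g t)) (𝓝 (1:ℝ)) (𝓝 ((1 - 1) * (t * g t))) :=
        ((continuous_const.sub continuous_id).mul continuous_const).tendsto 1
      simpa using this.mono_left nhdsWithin_le_nhds
  rw [MeasureTheory.integral_zero] at key
  refine Tendsto.congr' ?_ key
  filter_upwards [hIoo_mem] with x hx
  have hsub : Ioc (0:ℝ) x ⊆ Ioo (0:ℝ) 1 := fun t ht => ⟨ht.1, lt_of_le_of_lt ht.2 hx.2⟩
  rw [hΦ, MeasureTheory.integral_indicator measurableSet_Ioc, hμ,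
    Measure.restrict_restrict measurableSet_Ioc, inter_eq_left.2 hsub]
  rw [intervalIntegral.integral_of_le hx.1.le, ← MeasureTheory.integral_const_mul]

/-- Construction of the solution of the auxiliary problem with `v''' = g`. -/
lemma aux_main {g : ℝ → ℝ} (hg : ContinuousOn g (Ico 0 1))
    (hψ : IntervalIntegrable (fun t => (1 - t) * g t) MeasureTheory.volume 0 1) :
    ∃ v : ℝ → ℝ, ContDiffOn ℝ 1 v (Icc 0 1) ∧ ContDiffOn ℝ 3 v (Ico 0 1) ∧
      (∀ x ∈ Ioo (0:ℝ) 1, deriv (deriv (deriv v)) x = g x) ∧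
      v 1 = 0 ∧ derivWithin v (Icc 0 1) 1 = 0 ∧ derivWithin v (Icc 0 1) 0 = 0 := by
  have hψc : ContinuousOn (fun t => (1 - t) * g t) (Ico 0 1) :=
    ((continuous_const.sub continuous_id).continuousOn).mul hg
  have htgc : ContinuousOn (fun t => t * g t) (Ico 0 1) :=
    (continuous_id.continuousOn).mul hg
  have hψi : ∀ x ∈ Ico (0:ℝ) 1,
      IntervalIntegrable (fun t => (1 - t) * g t) MeasureTheory.volume 1 x := by
    intro x hx
    refine hψ.symm.mono_set ?_
    rw [uIcc_of_ge zero_le_one]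
    exact uIcc_subset_Icc (right_mem_Icc.2 zero_le_one) ⟨hx.1, hx.2.le⟩
  have htgi : ∀ x ∈ Ico (0:ℝ) 1,
      IntervalIntegrable (fun t => t * g t) MeasureTheory.volume 0 x := by
    intro x hx
    refine (htgc.mono ?_).intervalIntegrable
    rw [uIcc_of_le hx.1]
    exact fun t ht => ⟨ht.1, lt_of_le_of_lt ht.2 hx.2⟩
  set F : ℝ → ℝ := fun x => ∫ t in (1:ℝ)..x, (1 - t) * g t with hFdef
  set H : ℝ → ℝ := fun x => ∫ t in (0:ℝ)..x, t * g t with hHdef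
  set w : ℝ → ℝ := fun x => x * F x - (1 - x) * H x with hwdef
  -- derivatives of F and H within Ico
  have hF' : ∀ x ∈ Ico (0:ℝ) 1, HasDerivWithinAt F ((1 - x) * g x) (Ico 0 1) x := fun x hx =>
    aux_ftc_Ico hψc hψi hx
  have hH' : ∀ x ∈ Ico (0:ℝ) 1, HasDerivWithinAt H (x * g x) (Ico 0 1) x := fun x hx =>
    aux_ftc_Ico htgc htgi hx
  have hw' : ∀ x ∈ Ico (0:ℝ) 1, HasDerivWithinAt w (H x + F x) (Ico 0 1) x := by
    intro x hx
    have h1 : HasDerivWithinAt (fun y => y * F y) (1 * F x + x * ((1 - x) * g x))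
        (Ico 0 1) x := (hasDerivWithinAt_id x _).mul (hF' x hx)
    have h2 : HasDerivWithinAt (fun y : ℝ => 1 - y) (-1) (Ico (0:ℝ) 1) x := by
      simpa using (hasDerivWithinAt_id x (Ico (0:ℝ) 1)).const_sub 1
    have h3 : HasDerivWithinAt (fun y => (1 - y) * H y) ((-1) * H x + (1 - x) * (x * g x))
        (Ico 0 1) x := h2.mul (hH' x hx)
    have := h1.sub h3
    exact this.congr_deriv (by ring)
  have hw2' : ∀ x ∈ Ico (0:ℝ) 1, HasDerivWithinAt (fun y => H y + F y) (g x) (Ico 0 1) x := by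
    intro x hx
    have := (hH' x hx).add (hF' x hx)
    exact this.congr_deriv (by ring)
  -- continuity
  have hFc : ContinuousOn F (Icc 0 1) := by
    have hmem1 : (1:ℝ) ∈ uIcc (0:ℝ) 1 := by
      rw [uIcc_of_le zero_le_one]; exact right_mem_Icc.2 zero_le_one
    have := continuousOn_primitive_interval' hψ hmem1
    rwa [uIcc_of_le zero_le_one] at this
  have hHcIco : ContinuousOn H (Ico 0 1) := by
    intro x hx
    set b : ℝ := (x + 1) / 2 with hbdef
    have hxb : x < b := by rw [hbdef]; linarith [hx.2]
    have hb1 : b < 1 := by rw [hbdef]; linarith [hx.2]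
    have hb0 : (0:ℝ) ≤ b := by rw [hbdef]; linarith [hx.1]
    have hHcc : ContinuousOn H (Icc 0 b) := by
      have hmem0 : (0:ℝ) ∈ uIcc (0:ℝ) b := by
        rw [uIcc_of_le hb0]; exact left_mem_Icc.2 hb0
      have := continuousOn_primitive_interval' (htgi b ⟨hb0, hb1⟩) hmem0
      rwa [uIcc_of_le hb0] at this
    refine (hHcc x ⟨hx.1, hxb.le⟩).mono_of_mem_nhdsWithin ?_
    exact mem_nhdsWithin.2 ⟨Iio b, isOpen_Iio, hxb, fun t ht => ⟨ht.2.1, ht.1.le⟩⟩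
  have hwcIco : ContinuousOn w (Ico 0 1) :=
    ((continuous_id.continuousOn).mul (hFc.mono Ico_subset_Icc_self)).sub
      (((continuous_const.sub continuous_id).continuousOn).mul hHcIco)
  have hF1 : F 1 = 0 := intervalIntegral.integral_same
  have hw1 : w 1 = 0 := by rw [hwdef]; simp [hF1]
  have hw0 : w 0 = 0 := by
    have hH0 : H 0 = 0 := intervalIntegral.integral_same
    rw [hwdef]; simp [hH0]
  -- continuity of w on the closed interval
  have hw_cw1 : ContinuousWithinAt w (Icc 0 1) 1 := by
    have t1 : Tendsto (fun x => x * F x) (𝓝[Icc (0:ℝ) 1] 1) (𝓝 0) := by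
      have := (continuousWithinAt_id.mul (hFc 1 (right_mem_Icc.2 zero_le_one)))
      have h := this.tendsto; rw [Pi.mul_apply, hF1, mul_zero] at h; exact h
    have t2 : Tendsto (fun x => (1 - x) * H x) (𝓝[Icc (0:ℝ) 1] 1) (𝓝 0) := by
      have hpure : Tendsto (fun x => (1 - x) * H x) (pure (1:ℝ)) (𝓝 0) := by
        have := tendsto_pure_nhds (fun x => (1 - x) * H x) 1
        simpa using this
      have hsup : Tendsto (fun x => (1 - x) * H x) (𝓝[<] (1:ℝ) ⊔ pure 1) (𝓝 0) :=
        (aux_tendsto_H hg hψ).sup hpure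
      refine hsup.mono_left ?_
      rw [← nhdsWithin_singleton, ← nhdsWithin_union]
      refine nhdsWithin_mono 1 fun t ht => ?_
      rcases eq_or_lt_of_le ht.2 with h | h
      · exact Or.inr h
      · exact Or.inl h
    have : Tendsto w (𝓝[Icc (0:ℝ) 1] 1) (𝓝 (0 - 0)) := t1.sub t2
    simpa [ContinuousWithinAt, hw1] using this
  have hwcIcc : ContinuousOn w (Icc 0 1) := by
    intro x hx
    rcases eq_or_lt_of_le hx.2 with h1 | h1
    · rw [h1]; exact hw_cw1
    · refine (hwcIco x ⟨hx.1, h1⟩).mono_of_mem_nhdsWithin ?_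
      exact mem_nhdsWithin.2 ⟨Iio 1, isOpen_Iio, h1, fun t ht => ⟨ht.2.1, ht.1⟩⟩
  -- the solution
  set v : ℝ → ℝ := fun x => ∫ t in (1:ℝ)..x, w t with hvdef
  have hwint : ∀ x ∈ Icc (0:ℝ) 1, IntervalIntegrable w MeasureTheory.volume 1 x := by
    intro x hx
    refine (hwcIcc.mono ?_).intervalIntegrable
    exact fun t ht => ⟨le_trans (le_min zero_le_one hx.1) ht.1,
      le_trans ht.2 (max_le le_rfl hx.2)⟩
  have hv' : ∀ x ∈ Icc (0:ℝ) 1, HasDerivWithinAt v (w x) (Icc 0 1) x := by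
    intro x hx
    haveI : Fact (x ∈ Icc (0:ℝ) 1) := ⟨hx⟩
    exact intervalIntegral.integral_hasDerivWithinAt_right (hwint x hx)
      ⟨Icc 0 1, self_mem_nhdsWithin, hwcIcc.aestronglyMeasurable measurableSet_Icc⟩
      (hwcIcc x hx)
  have hvD : ∀ x ∈ Icc (0:ℝ) 1, derivWithin v (Icc 0 1) x = w x := fun x hx =>
    (hv' x hx).derivWithin ((uniqueDiffOn_Icc zero_lt_one) x hx)
  have hv'Ico : ∀ x ∈ Ico (0:ℝ) 1, HasDerivWithinAt v (w x) (Ico 0 1) x := fun x hx =>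
    (hv' x ⟨hx.1, hx.2.le⟩).mono Ico_subset_Icc_self
  refine ⟨v, ?_, ?_, ?_, ?_, ?_, ?_⟩
  · -- C¹ on Icc
    rw [show (1 : WithTop ℕ∞) = 0 + 1 from (zero_add 1).symm,
      contDiffOn_succ_iff_derivWithin (uniqueDiffOn_Icc zero_lt_one)]
    refine ⟨fun x hx => (hv' x hx).differentiableWithinAt, by simp, ?_⟩
    rw [contDiffOn_zero]
    exact hwcIcc.congr fun x hx => hvD x hx
  · -- C³ on Ico
    have hvDIco : ∀ x ∈ Ico (0:ℝ) 1, derivWithin v (Ico 0 1) x = w x := fun x hx =>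
      (hv'Ico x hx).derivWithin ((uniqueDiffOn_Ico 0 1) x hx)
    have hwDIco : ∀ x ∈ Ico (0:ℝ) 1, derivWithin w (Ico 0 1) x = H x + F x := fun x hx =>
      (hw' x hx).derivWithin ((uniqueDiffOn_Ico 0 1) x hx)
    have hHFDIco : ∀ x ∈ Ico (0:ℝ) 1,
        derivWithin (fun y => H y + F y) (Ico 0 1) x = g x := fun x hx =>
      (hw2' x hx).derivWithin ((uniqueDiffOn_Ico 0 1) x hx)
    rw [show (3 : WithTop ℕ∞) = 2 + 1 by norm_num,
      contDiffOn_succ_iff_derivWithin (uniqueDiffOn_Ico 0 1)]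
    refine ⟨fun x hx => (hv'Ico x hx).differentiableWithinAt, by simp, ?_⟩
    have hw_cd2 : ContDiffOn ℝ 2 w (Ico 0 1) := by
      rw [show (2 : WithTop ℕ∞) = 1 + 1 by norm_num,
        contDiffOn_succ_iff_derivWithin (uniqueDiffOn_Ico 0 1)]
      refine ⟨fun x hx => (hw' x hx).differentiableWithinAt, by simp, ?_⟩
      have hHF_cd1 : ContDiffOn ℝ 1 (fun y => H y + F y) (Ico 0 1) := by
        rw [show (1 : WithTop ℕ∞) = 0 + 1 from (zero_add 1).symm,
          contDiffOn_succ_iff_derivWithin (uniqueDiffOn_Ico 0 1)]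
        refine ⟨fun x hx => (hw2' x hx).differentiableWithinAt, by simp, ?_⟩
        rw [contDiffOn_zero]
        exact hg.congr fun x hx => hHFDIco x hx
      exact hHF_cd1.congr fun x hx => hwDIco x hx
    exact hw_cd2.congr fun x hx => hvDIco x hx
  · -- third derivative
    intro x hx
    have hd1 : ∀ y ∈ Ioo (0:ℝ) 1, HasDerivAt v (w y) y := fun y hy =>
      (hv' y ⟨hy.1.le, hy.2.le⟩).hasDerivAt (Icc_mem_nhds hy.1 hy.2)
    have h_deriv_v : EqOn (deriv v) w (Ioo 0 1) := fun y hy => (hd1 y hy).deriv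
    have hd2 : ∀ y ∈ Ioo (0:ℝ) 1, HasDerivAt w (H y + F y) y := fun y hy =>
      (hw' y ⟨hy.1.le, hy.2⟩).hasDerivAt (Ico_mem_nhds hy.1 hy.2)
    have h_dd : EqOn (deriv (deriv v)) (fun y => H y + F y) (Ioo 0 1) := by
      intro y hy
      have e1 : deriv v =ᶠ[𝓝 y] w := eventually_of_mem (Ioo_mem_nhds hy.1 hy.2) h_deriv_v
      rw [Filter.EventuallyEq.deriv_eq e1]
      exact (hd2 y hy).deriv
    have e2 : deriv (deriv v) =ᶠ[𝓝 x] fun y => H y + F y :=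
      eventually_of_mem (Ioo_mem_nhds hx.1 hx.2) h_dd
    rw [Filter.EventuallyEq.deriv_eq e2]
    exact ((hw2' x ⟨hx.1.le, hx.2⟩).hasDerivAt (Ico_mem_nhds hx.1 hx.2)).deriv
  · rw [hvdef]; exact intervalIntegral.integral_same
  · rw [hvD 1 (right_mem_Icc.2 zero_le_one), hw1]
  · rw [hvD 0 (left_mem_Icc.2 zero_le_one), hw0]

/-- For a solution `u` of the ODE, the closed-interval derivative is continuous and twice
differentiable on the open interval with second derivative `g`. -/
lemma aux_sol_D {g u : ℝ → ℝ}
    (h1 : ContDiffOn ℝ 1 u (Icc 0 1)) (h3 : ContDiffOn ℝ 3 u (Ico 0 1))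
    (hpde : ∀ x ∈ Ioo (0:ℝ) 1, deriv (deriv (deriv u)) x = g x) :
    ContinuousOn (derivWithin u (Icc 0 1)) (Icc 0 1) ∧
      ∃ D1 : ℝ → ℝ, (∀ x ∈ Ioo (0:ℝ) 1, HasDerivAt (derivWithin u (Icc 0 1)) (D1 x) x) ∧
        (∀ x ∈ Ioo (0:ℝ) 1, HasDerivAt D1 (g x) x) := by
  have hu1 := h1
  rw [show (1 : WithTop ℕ∞) = 0 + 1 from (zero_add 1).symm,
    contDiffOn_succ_iff_derivWithin (uniqueDiffOn_Icc zero_lt_one)] at hu1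
  obtain ⟨hu_diff, -, hu_cd0⟩ := hu1
  have hDc : ContinuousOn (derivWithin u (Icc 0 1)) (Icc 0 1) := contDiffOn_zero.1 hu_cd0
  have h3' := h3
  rw [show (3 : WithTop ℕ∞) = 2 + 1 by norm_num,
    contDiffOn_succ_iff_derivWithin (uniqueDiffOn_Ico 0 1)] at h3'
  obtain ⟨hu_diff', -, h2⟩ := h3'
  set DW := derivWithin u (Ico 0 1) with hDWdef
  rw [show (2 : WithTop ℕ∞) = 1 + 1 by norm_num,
    contDiffOn_succ_iff_derivWithin (uniqueDiffOn_Ico 0 1)] at h2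
  obtain ⟨hDW_diff, -, h2'⟩ := h2
  set DW2 := derivWithin DW (Ico 0 1) with hDW2def
  rw [show (1 : WithTop ℕ∞) = 0 + 1 from (zero_add 1).symm,
    contDiffOn_succ_iff_derivWithin (uniqueDiffOn_Ico 0 1)] at h2'
  obtain ⟨hDW2_diff, -, -⟩ := h2'
  refine ⟨hDc, DW2, ?_, ?_⟩
  · intro x hx
    have hIco : Ico (0:ℝ) 1 ∈ 𝓝 x := Ico_mem_nhds hx.1 hx.2
    have hDWdiffAt : DifferentiableAt ℝ DW x :=
      (hDW_diff x ⟨hx.1.le, hx.2⟩).differentiableAt hIco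
    have hDW2eq : DW2 x = deriv DW x := by rw [hDW2def]; exact derivWithin_of_mem_nhds hIco
    have hDWD : HasDerivAt DW (DW2 x) x := by rw [hDW2eq]; exact hDWdiffAt.hasDerivAt
    have heq : ∀ y ∈ Ioo (0:ℝ) 1, derivWithin u (Icc 0 1) y = DW y := by
      intro y hy
      rw [derivWithin_of_mem_nhds (Icc_mem_nhds hy.1 hy.2), hDWdef,
        derivWithin_of_mem_nhds (Ico_mem_nhds hy.1 hy.2)]
    exact hDWD.congr_of_eventuallyEq (eventually_of_mem (Ioo_mem_nhds hx.1 hx.2) heq)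
  · intro x hx
    have hIco : Ico (0:ℝ) 1 ∈ 𝓝 x := Ico_mem_nhds hx.1 hx.2
    have hDW2diffAt : DifferentiableAt ℝ DW2 x :=
      (hDW2_diff x ⟨hx.1.le, hx.2⟩).differentiableAt hIco
    have e1 : ∀ y ∈ Ioo (0:ℝ) 1, deriv u y = DW y := by
      intro y hy
      rw [hDWdef, derivWithin_of_mem_nhds (Ico_mem_nhds hy.1 hy.2)]
    have e2 : ∀ y ∈ Ioo (0:ℝ) 1, deriv (deriv u) y = DW2 y := by
      intro y hy
      have := Filter.EventuallyEq.deriv_eq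
        (eventually_of_mem (Ioo_mem_nhds hy.1 hy.2) e1 : deriv u =ᶠ[𝓝 y] DW)
      rw [this, hDW2def, derivWithin_of_mem_nhds (Ico_mem_nhds hy.1 hy.2)]
    have e3 : deriv (deriv (deriv u)) x = deriv DW2 x :=
      Filter.EventuallyEq.deriv_eq
        (eventually_of_mem (Ioo_mem_nhds hx.1 hx.2) e2 : deriv (deriv u) =ᶠ[𝓝 x] DW2)
    have hder : deriv DW2 x = g x := by rw [← e3]; exact hpde x hx
    rw [← hder]
    exact hDW2diffAt.hasDerivAt


/-- Unique solvability of the auxiliary problem (problem_v) for weak contact-line friction: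
if `n > 0`, `f > 0` is continuous on `[0,1)` and `∫₀¹ x(1−x)²(1+x) f^{−n} dx < ∞`, then there
is exactly one `v`, continuously differentiable on `[0,1]` and three times continuously
differentiable on `[0,1)`, with `fⁿ·v''' = c·x·(1 − x²)` on `(0,1)`, `v(1) = 0`,
`v'(1) = 0`, and `v'(0) = 0`. -/
theorem auxiliary_problem_v_unique
    (n : ℝ) (hn : 0 < n) (c : ℝ)
    (f : ℝ → ℝ) (hfc : ContinuousOn f (Set.Ico 0 1))
    (hfpos : ∀ x ∈ Set.Ico (0:ℝ) 1, 0 < f x)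
    (hint : IntervalIntegrable (fun x => x * (1 - x) ^ 2 * (1 + x) * f x ^ (-n))
      MeasureTheory.volume 0 1) :
    ∃ v : ℝ → ℝ,
      (ContDiffOn ℝ 1 v (Set.Icc 0 1) ∧
        ContDiffOn ℝ 3 v (Set.Ico 0 1) ∧
        (∀ x ∈ Set.Ioo (0:ℝ) 1, f x ^ n * deriv (deriv (deriv v)) x = c * x * (1 - x ^ 2)) ∧
        v 1 = 0 ∧
        derivWithin v (Set.Icc 0 1) 1 = 0 ∧
        derivWithin v (Set.Icc 0 1) 0 = 0) ∧
      ∀ v' : ℝ → ℝ,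
        (ContDiffOn ℝ 1 v' (Set.Icc 0 1) ∧
          ContDiffOn ℝ 3 v' (Set.Ico 0 1) ∧
          (∀ x ∈ Set.Ioo (0:ℝ) 1, f x ^ n * deriv (deriv (deriv v')) x = c * x * (1 - x ^ 2)) ∧
          v' 1 = 0 ∧
          derivWithin v' (Set.Icc 0 1) 1 = 0 ∧
          derivWithin v' (Set.Icc 0 1) 0 = 0) →
        ∀ x ∈ Set.Icc (0:ℝ) 1, v' x = v x := by
  set g : ℝ → ℝ := fun x => c * (x * (1 - x ^ 2)) * f x ^ (-n) with hgdef
  have hgc : ContinuousOn g (Ico 0 1) := by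
    apply ContinuousOn.mul
    · exact (continuous_const.mul (continuous_id.mul
        (continuous_const.sub (continuous_pow 2)))).continuousOn
    · exact hfc.rpow_const fun x hx => Or.inl (hfpos x hx).ne'
  have hψ : IntervalIntegrable (fun t => (1 - t) * g t) MeasureTheory.volume 0 1 := by
    have heq : (fun t => (1 - t) * g t)
        = fun t => c * (t * (1 - t) ^ 2 * (1 + t) * f t ^ (-n)) := by
      funext t; rw [hgdef]; ring
    rw [heq]
    exact hint.const_mul c
  have hfng : ∀ x ∈ Ioo (0:ℝ) 1, f x ^ n * g x = c * x * (1 - x ^ 2) := by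
    intro x hx
    have hfx : 0 < f x := hfpos x ⟨hx.1.le, hx.2⟩
    rw [hgdef]
    have hre : f x ^ n * (c * (x * (1 - x ^ 2)) * f x ^ (-n))
        = c * (x * (1 - x ^ 2)) * (f x ^ n * f x ^ (-n)) := by ring
    rw [hre, ← Real.rpow_add hfx, add_neg_cancel, Real.rpow_zero, mul_one]; ring
  obtain ⟨v, hv1, hv3, hvpde, hv10, hvD1, hvD0⟩ := aux_main hgc hψ
  have hvpde' : ∀ x ∈ Ioo (0:ℝ) 1,
      f x ^ n * deriv (deriv (deriv v)) x = c * x * (1 - x ^ 2) := by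
    intro x hx
    rw [hvpde x hx]; exact hfng x hx
  refine ⟨v, ⟨hv1, hv3, hvpde', hv10, hvD1, hvD0⟩, ?_⟩
  rintro u ⟨hu1, hu3, hupde, hu10, huD1, huD0⟩ x hx
  have hupde' : ∀ y ∈ Ioo (0:ℝ) 1, deriv (deriv (deriv u)) y = g y := by
    intro y hy
    have hfy : 0 < f y := hfpos y ⟨hy.1.le, hy.2⟩
    have hne : f y ^ n ≠ 0 := (Real.rpow_pos_of_pos hfy n).ne'
    exact mul_left_cancel₀ hne ((hupde y hy).trans (hfng y hy).symm)
  obtain ⟨hDuc, Du1, hDud1, hDud2⟩ := aux_sol_D hu1 hu3 hupde'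
  obtain ⟨hDvc, Dv1, hDvd1, hDvd2⟩ := aux_sol_D hv1 hv3 hvpde
  have hP := aux_bvp_unique
    (P := fun y => derivWithin u (Icc 0 1) y - derivWithin v (Icc 0 1) y)
    (P1 := fun y => Du1 y - Dv1 y)
    (hDuc.sub hDvc)
    (by show derivWithin u (Icc 0 1) 0 - derivWithin v (Icc 0 1) 0 = 0; rw [huD0, hvD0]; ring)
    (by show derivWithin u (Icc 0 1) 1 - derivWithin v (Icc 0 1) 1 = 0; rw [huD1, hvD1]; ring)
    (fun y hy => (hDud1 y hy).sub (hDvd1 y hy))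
    (fun y hy => by have h := (hDud2 y hy).sub (hDvd2 y hy); rw [sub_self] at h; exact h)
  have hu_diff : DifferentiableOn ℝ u (Icc 0 1) := hu1.differentiableOn one_ne_zero
  have hv_diff : DifferentiableOn ℝ v (Icc 0 1) := hv1.differentiableOn one_ne_zero
  have hderiv0 : ∀ y ∈ Ico (0:ℝ) 1,
      HasDerivWithinAt (fun z => u z - v z) 0 (Ici y) y := by
    intro y hy
    have hyIcc : y ∈ Icc (0:ℝ) 1 := ⟨hy.1, hy.2.le⟩
    have hioo : HasDerivWithinAt (fun z => u z - v z)
        (derivWithin u (Icc 0 1) y - derivWithin v (Icc 0 1) y) (Icc 0 1) y :=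
      ((hu_diff y hyIcc).hasDerivWithinAt).sub ((hv_diff y hyIcc).hasDerivWithinAt)
    have hz : derivWithin u (Icc 0 1) y - derivWithin v (Icc 0 1) y = 0 := hP y hyIcc
    rw [hz] at hioo
    refine hioo.mono_of_mem_nhdsWithin ?_
    exact mem_nhdsWithin.2 ⟨Iio 1, isOpen_Iio, hy.2,
      fun t ht => ⟨le_trans hy.1 ht.2, ht.1.le⟩⟩
  have hconst := constant_of_has_deriv_right_zero
    (f := fun y => u y - v y) (a := (0:ℝ)) (b := 1)
    ((hu1.continuousOn).sub (hv1.continuousOn)) hderiv0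
  have h1' : u 1 - v 1 = u 0 - v 0 := hconst 1 (right_mem_Icc.2 zero_le_one)
  have hx' : u x - v x = u 0 - v 0 := hconst x hx
  have hz1 : u 1 - v 1 = 0 := by rw [hu10, hv10]; ring
  linarith
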